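/- Every two-stack sortable permutation π of length n ≥ 1 is obtained in exactly one way by the constructions C1 and C2: either there is a unique pair (π1, π2), with each of π1, π2 empty or a 2SSP, such that π = C1(π1, π2); or there is a unique triple (π1, π2, i), with π1 and π2 nonempty 2SSPs and 1 ≤ i ≤ slmax(π2), such that π = C2(π1, π2, i); and these two cases are mutually exclusive. -/

import Mathlib

namespace TSP

theorem foldr_max_mem {α : Type} [LinearOrder α] (x : α) (l : List α) :
    l.foldr max x ∈ x :: l := by
  induction l with
  | nil => simp
  | cons a t ih =>
    simp only [List.foldr_cons]
    rcases max_choice a (t.foldr max x) with h | h <;> rw [h]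
    · simp
    · rcases List.mem_cons.mp ih with h' | h'
      · rw [h']; simp
      · exact List.mem_cons.mpr (Or.inr (List.mem_cons.mpr (Or.inr h')))

theorem length_takeWhile_lt {α : Type} [DecidableEq α] {m : α} {l : List α}
    (h : m ∈ l) : (l.takeWhile (· ≠ m)).length < l.length := by
  have hd : l.dropWhile (· ≠ m) ≠ [] := by
    intro hnil
    have := List.dropWhile_eq_nil_iff.mp hnil m h
    simp at this
  have hsum : (l.takeWhile (· ≠ m)).length + (l.dropWhile (· ≠ m)).length = l.length := by
    rw [← List.length_append, List.takeWhile_append_dropWhile]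
  have : 0 < (l.dropWhile (· ≠ m)).length := List.length_pos_iff.mpr hd
  omega

theorem length_tail_dropWhile_lt {α : Type} [DecidableEq α] {m : α} {l : List α}
    (h : l ≠ []) : ((l.dropWhile (· ≠ m)).tail).length < l.length := by
  have hsum : (l.takeWhile (· ≠ m)).length + (l.dropWhile (· ≠ m)).length = l.length := by
    rw [← List.length_append, List.takeWhile_append_dropWhile]
  have h2 : ((l.dropWhile (· ≠ m)).tail).length = (l.dropWhile (· ≠ m)).length - 1 :=
    List.length_tail
  have : 0 < l.length := List.length_pos_iff.mpr h
  omega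

/-- The stack-sorting operator `S`: `S(ε) = ε`, and if `A` is nonempty with
largest element `m` and `A = A_L · (m) · A_R`, then `S(A) = S(A_L) · S(A_R) · (m)`. -/
def S {α : Type} [LinearOrder α] : List α → List α
  | [] => []
  | x :: l =>
    let m := l.foldr max x
    S ((x :: l).takeWhile (· ≠ m)) ++ S (((x :: l).dropWhile (· ≠ m)).tail) ++ [m]
termination_by l => l.length
decreasing_by
  · simp only [List.foldr_attach]; exact length_takeWhile_lt (foldr_max_mem x l)
  · exact length_tail_dropWhile_lt (by simp)

/-- The identity permutation `id_n = (1, 2, …, n)` as a list. -/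
def idPerm (n : ℕ) : List ℕ := List.range' 1 n

/-- `l` is a permutation of `{1, …, n}` (viewed as a sequence). -/
def IsPermOf (n : ℕ) (l : List ℕ) : Prop := l.Perm (idPerm n)

/-- `l` is a two-stack sortable permutation (of `{1, …, len l}`). -/
def Is2SS (l : List ℕ) : Prop := IsPermOf l.length l ∧ S (S l) = idPerm l.length

/-- `σ^{+k}`: add `k` to every entry. -/
def shift (k : ℕ) (l : List ℕ) : List ℕ := l.map (· + k)

/-- `σ^{+(k1,m,k2)}`: add `k1` to every entry strictly smaller than `m`, `k2` to the others. -/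
def shift3 (k1 m k2 : ℕ) (l : List ℕ) : List ℕ :=
  l.map (fun a => if a < m then a + k1 else a + k2)

/-- Standardization `P(A)`: the permutation of `{1,…,len A}` in the same relative order. -/
def stand (l : List ℕ) : List ℕ := l.map (fun a => (l.filter (fun b => b ≤ a)).length)

/-- Avoidance of the pattern 231: no positions `i < j < k` with `l(k) < l(i) < l(j)`. -/
def Avoids231 (l : List ℕ) : Prop :=
  ¬ ∃ i j k, i < j ∧ j < k ∧ k < l.length ∧
      l.getD k 0 < l.getD i 0 ∧ l.getD i 0 < l.getD j 0

/-- The list of values of the left-to-right maxima of `l`, in order. -/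
def lrMaxima (l : List ℕ) : List ℕ :=
  ((List.range l.length).filter
    (fun i => (l.take i).all (fun b => b < l.getD i 0))).map (fun i => l.getD i 0)

/-- `lmax`: the number of left-to-right maxima. -/
def lmax (l : List ℕ) : ℕ :=
  (List.range l.length).countP (fun i => (l.take i).all (fun b => b < l.getD i 0))

/-- `rmax`: the number of right-to-left maxima. -/
def rmax (l : List ℕ) : ℕ :=
  (List.range l.length).countP (fun i => (l.drop (i+1)).all (fun b => b < l.getD i 0))

/-- `asc`: the number of ascents. -/
def asc (l : List ℕ) : ℕ :=
  (List.range (l.length - 1)).countP (fun i => l.getD i 0 < l.getD (i+1) 0)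

/-- `des`: the number of descents. -/
def des (l : List ℕ) : ℕ :=
  (List.range (l.length - 1)).countP (fun i => l.getD (i+1) 0 < l.getD i 0)

/-- `slmax(π)`: the number of left-to-right maxima of `S(π)`. -/
def slmax (l : List ℕ) : ℕ := lmax (S l)

/-- `sldes(π)`: the number of entries `a` that precede `a - 1` in `S(π)`. -/
def sldes (l : List ℕ) : ℕ :=
  (List.range (S l).length).countP
    (fun i => ((S l).drop (i+1)).any (fun b => b + 1 = (S l).getD i 0))

/-- The construction `C1(π1, π2) = π1 · (k+ℓ+1) · π2^{+k}`. -/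
def C1 (p1 p2 : List ℕ) : List ℕ :=
  p1 ++ (p1.length + p2.length + 1) :: shift p1.length p2

/-- The `i`-th left-to-right maximum `a_i` of `S(π2)` (1-indexed). -/
def lrm (p2 : List ℕ) (i : ℕ) : ℕ := (lrMaxima (S p2)).getD (i - 1) 0

/-- The construction `C2(π1, π2, i) = π1^{+(0,k,a_i)} · (k+ℓ+1) · π2^{+(k-1,a_i+1,k)}`. -/
def C2 (p1 p2 : List ℕ) (i : ℕ) : List ℕ :=
  shift3 0 p1.length (lrm p2 i) p1 ++
    (p1.length + p2.length + 1) :: shift3 (p1.length - 1) (lrm p2 i + 1) p1.length p2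

/-- The decomposition `D(π) = (P(π_ℓ), P(π_r))`, where `π = π_ℓ · (n) · π_r`
with `n` the largest entry of `π`. -/
def D (l : List ℕ) : List ℕ × List ℕ :=
  match l with
  | [] => ([], [])
  | x :: t =>
    let m := t.foldr max x
    (stand ((x :: t).takeWhile (· ≠ m)), stand (((x :: t).dropWhile (· ≠ m)).tail))

/-! ### Auxiliary lemmas -/

theorem le_foldr_max (x : ℕ) (l : List ℕ) : ∀ a ∈ x :: l, a ≤ l.foldr max x := by
  induction l generalizing x with
  | nil => simp
  | cons b t ih =>
    intro a ha
    simp only [List.foldr_cons]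
    rcases List.mem_cons.mp ha with rfl | ha
    · exact le_trans (ih a a (by simp)) (le_max_right _ _)
    · rcases List.mem_cons.mp ha with rfl | ha
      · exact le_max_left _ _
      · exact le_trans (ih x a (List.mem_cons_of_mem _ ha)) (le_max_right _ _)

theorem dropWhile_ne_nil {m : ℕ} {l : List ℕ} (hm : m ∈ l) :
    l.dropWhile (· ≠ m) ≠ [] := by
  intro hnil
  have := List.dropWhile_eq_nil_iff.mp hnil m hm
  simp at this

theorem decomp {m : ℕ} {l : List ℕ} (hm : m ∈ l) :
    l = l.takeWhile (· ≠ m) ++ m :: (l.dropWhile (· ≠ m)).tail := by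
  have hne := dropWhile_ne_nil hm
  have hhead : (l.dropWhile (· ≠ m)).head hne = m := by
    have := List.head_dropWhile_not (fun a => decide (a ≠ m)) hne
    simpa using this
  conv_lhs => rw [← List.takeWhile_append_dropWhile (p := fun a => decide (a ≠ m)) (l := l)]
  congr 1
  have h3 := List.cons_head_tail hne
  rw [hhead] at h3
  exact h3.symm

theorem S_cons (x : ℕ) (t : List ℕ) :
    S (x :: t) = S ((x :: t).takeWhile (· ≠ t.foldr max x)) ++
      S (((x :: t).dropWhile (· ≠ t.foldr max x)).tail) ++ [t.foldr max x] := by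
  rw [S]

theorem S_perm : ∀ l : List ℕ, (S l).Perm l
  | [] => by simp [S]
  | x :: t => by
    rw [S_cons]
    have hm_mem : t.foldr max x ∈ x :: t := foldr_max_mem x t
    have h1 := S_perm ((x :: t).takeWhile (· ≠ t.foldr max x))
    have h2 := S_perm (((x :: t).dropWhile (· ≠ t.foldr max x)).tail)
    have hd := decomp hm_mem
    rw [List.append_assoc]
    refine List.Perm.trans (h1.append ((h2.append (List.Perm.refl _)).trans
      (List.perm_append_singleton _ _))) ?_
    rw [← hd]
  termination_by l => l.length
  decreasing_by
  · exact length_takeWhile_lt (foldr_max_mem x t)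
  · exact length_tail_dropWhile_lt (by simp)

theorem foldr_max_map {f : ℕ → ℕ} (hf : Monotone f) (x : ℕ) (t : List ℕ) :
    (t.map f).foldr max (f x) = f (t.foldr max x) := by
  induction t with
  | nil => rfl
  | cons b u ih => simp only [List.map_cons, List.foldr_cons, ih, hf.map_max]

theorem S_map {f : ℕ → ℕ} (hf : StrictMono f) : ∀ l : List ℕ, S (l.map f) = (S l).map f
  | [] => by simp [S]
  | x :: t => by
    have hmax : (t.map f).foldr max (f x) = f (t.foldr max x) :=
      foldr_max_map hf.monotone x t
    have hpred : (fun a => decide (a ≠ f (t.foldr max x))) ∘ f =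
        fun a => decide (a ≠ t.foldr max x) := by
      funext a
      simp [Function.comp, hf.injective.ne_iff]
    rw [List.map_cons, S_cons, S_cons, hmax]
    rw [show ((f x :: t.map f) : List ℕ) = (x :: t).map f by simp]
    rw [List.takeWhile_map, List.dropWhile_map, hpred]
    rw [← List.map_tail]
    rw [S_map hf ((x :: t).takeWhile (· ≠ t.foldr max x)),
        S_map hf (((x :: t).dropWhile (· ≠ t.foldr max x)).tail)]
    simp
  termination_by l => l.length
  decreasing_by
  · exact length_takeWhile_lt (foldr_max_mem x t)
  · exact length_tail_dropWhile_lt (by simp)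

theorem takeWhile_append_eq {u v : List ℕ} {n : ℕ} (h : ∀ a ∈ u, a ≠ n) :
    (u ++ n :: v).takeWhile (· ≠ n) = u := by
  induction u with
  | nil => simp [List.takeWhile_cons]
  | cons a t ih =>
    have ha : a ≠ n := h a (by simp)
    simp only [List.cons_append, List.takeWhile_cons]
    rw [if_pos (by simpa using ha)]
    rw [ih (fun b hb => h b (by simp [hb]))]

theorem dropWhile_append_eq {u v : List ℕ} {n : ℕ} (h : ∀ a ∈ u, a ≠ n) :
    (u ++ n :: v).dropWhile (· ≠ n) = n :: v := by
  induction u with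
  | nil => simp [List.dropWhile_cons]
  | cons a t ih =>
    have ha : a ≠ n := h a (by simp)
    simp only [List.cons_append, List.dropWhile_cons]
    rw [if_pos (by simpa using ha)]
    exact ih (fun b hb => h b (by simp [hb]))

theorem foldr_max_eq {x m : ℕ} {t : List ℕ} (h : ∀ a ∈ x :: t, a ≤ m) :
    (t ++ [m]).foldr max x = m := by
  induction t generalizing x with
  | nil =>
    simp only [List.nil_append, List.foldr_cons, List.foldr_nil]
    exact max_eq_left (h x (by simp))
  | cons b u ih =>
    simp only [List.cons_append, List.foldr_cons]
    rw [ih (fun a ha => h a (by rcases List.mem_cons.mp ha with rfl | ha <;> simp [ha]))]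
    exact max_eq_right (h b (by simp))

theorem S_append_max {u : List ℕ} {m : ℕ} (hu : ∀ a ∈ u, a < m) :
    S (u ++ [m]) = S u ++ [m] := by
  cases u with
  | nil => simp [S]
  | cons x t =>
    have hle : ∀ a ∈ x :: t, a ≤ m := fun a ha => le_of_lt (hu a ha)
    rw [show ((x :: t) ++ [m] : List ℕ) = x :: (t ++ [m]) by simp]
    rw [S_cons, foldr_max_eq hle]
    rw [show (x :: (t ++ [m]) : List ℕ) = (x :: t) ++ [m] by simp]
    rw [takeWhile_append_eq (v := []) (fun a ha => ne_of_lt (hu a ha)),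
        dropWhile_append_eq (v := []) (fun a ha => ne_of_lt (hu a ha))]
    simp only [List.tail_cons]
    rw [show (S ([] : List ℕ)) = [] by rw [S]]
    simp

def Pat231 (l : List ℕ) : Prop := ∃ a b c, List.Sublist [a, b, c] l ∧ c < a ∧ a < b

theorem Pat231.mono {u v : List ℕ} (h : u.Sublist v) : Pat231 u → Pat231 v := by
  rintro ⟨a, b, c, hs, h1, h2⟩
  exact ⟨a, b, c, hs.trans h, h1, h2⟩

theorem S_nil : S ([] : List ℕ) = [] := by rw [S]

theorem sorted_S_of_not_pat : ∀ l : List ℕ, l.Nodup → ¬ Pat231 l →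
    List.Pairwise (· < ·) (S l)
  | [] => by intro _ _; rw [S_nil]; simp
  | x :: t => by
    intro hnd hpat
    have hd : x :: t = (x :: t).takeWhile (· ≠ t.foldr max x) ++
        t.foldr max x :: ((x :: t).dropWhile (· ≠ t.foldr max x)).tail :=
      decomp (foldr_max_mem x t)
    have hndAB : ((x :: t).takeWhile (· ≠ t.foldr max x) ++
        t.foldr max x :: ((x :: t).dropWhile (· ≠ t.foldr max x)).tail).Nodup := hd ▸ hnd
    have hndA := hndAB.of_append_left
    have hndB := (hndAB.of_append_right).of_cons
    have hdisj := List.disjoint_of_nodup_append hndAB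
    have hmB : t.foldr max x ∉ ((x :: t).dropWhile (· ≠ t.foldr max x)).tail := by
      have := hndAB.of_append_right
      exact (List.nodup_cons.mp this).1
    have hsubA : ((x :: t).takeWhile (· ≠ t.foldr max x)).Sublist (x :: t) :=
      List.takeWhile_sublist _
    have hsubB : (((x :: t).dropWhile (· ≠ t.foldr max x)).tail).Sublist (x :: t) :=
      (List.tail_sublist _).trans (List.dropWhile_sublist _)
    have hsA := sorted_S_of_not_pat ((x :: t).takeWhile (· ≠ t.foldr max x)) hndA
      (fun hp => hpat (hp.mono hsubA))
    have hsB := sorted_S_of_not_pat (((x :: t).dropWhile (· ≠ t.foldr max x)).tail) hndB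
      (fun hp => hpat (hp.mono hsubB))
    have hAne : ∀ a ∈ (x :: t).takeWhile (· ≠ t.foldr max x), a ≠ t.foldr max x :=
      fun a ha => by simpa using List.mem_takeWhile_imp ha
    have hle : ∀ a ∈ x :: t, a ≤ t.foldr max x := le_foldr_max x t
    have cross : ∀ a ∈ (x :: t).takeWhile (· ≠ t.foldr max x),
        ∀ b ∈ ((x :: t).dropWhile (· ≠ t.foldr max x)).tail, a < b := by
      intro a ha b hb
      have hne : a ≠ b := fun he => hdisj ha (he ▸ List.mem_cons_of_mem _ hb)
      by_contra hab
      push_neg at hab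
      have hba : b < a := lt_of_le_of_ne hab (Ne.symm hne)
      apply hpat
      refine ⟨a, t.foldr max x, b, ?_, hba, ?_⟩
      · rw [hd]
        have h1 : List.Sublist [a] ((x :: t).takeWhile (· ≠ t.foldr max x)) :=
          List.singleton_sublist.mpr ha
        have h2 : List.Sublist [b] (((x :: t).dropWhile (· ≠ t.foldr max x)).tail) :=
          List.singleton_sublist.mpr hb
        exact List.Sublist.append h1 (h2.cons₂ _)
      · exact lt_of_le_of_ne (hle a (hsubA.subset ha)) (hAne a ha)
    rw [S_cons, List.append_assoc]
    refine List.pairwise_append.mpr ⟨hsA, List.pairwise_append.mpr ⟨hsB, by simp, ?_⟩, ?_⟩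
    · intro b hb c hc
      rw [List.mem_singleton] at hc
      subst hc
      have hbB := (S_perm _).mem_iff.mp hb
      exact lt_of_le_of_ne (hle b (hsubB.subset hbB)) (fun he => hmB (he ▸ hbB))
    · intro a ha q hq
      have haA := (S_perm _).mem_iff.mp ha
      rcases List.mem_append.mp hq with hq | hq
      · exact cross a haA q ((S_perm _).mem_iff.mp hq)
      · rw [List.mem_singleton] at hq
        subst hq
        exact lt_of_le_of_ne (hle a (hsubA.subset haA)) (hAne a haA)
  termination_by l => l.length
  decreasing_by
  · exact length_takeWhile_lt (foldr_max_mem x t)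
  · exact length_tail_dropWhile_lt (by simp)

theorem not_pat_of_sorted_S : ∀ l : List ℕ, l.Nodup → Pat231 l →
    ¬ List.Pairwise (· < ·) (S l)
  | [] => by
    rintro _ ⟨a, b, c, hs, _, _⟩
    have := hs.length_le
    simp at this
  | x :: t => by
    rintro hnd ⟨a, b, c, hsub, hca, hab⟩ hsort
    have hd : x :: t = (x :: t).takeWhile (· ≠ t.foldr max x) ++
        t.foldr max x :: ((x :: t).dropWhile (· ≠ t.foldr max x)).tail :=
      decomp (foldr_max_mem x t)
    have hndAB : ((x :: t).takeWhile (· ≠ t.foldr max x) ++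
        t.foldr max x :: ((x :: t).dropWhile (· ≠ t.foldr max x)).tail).Nodup := hd ▸ hnd
    have hndA := hndAB.of_append_left
    have hndB := (hndAB.of_append_right).of_cons
    have hle : ∀ z ∈ x :: t, z ≤ t.foldr max x := le_foldr_max x t
    have ha_le : a ≤ t.foldr max x := hle a (hsub.subset (by simp))
    have hb_le : b ≤ t.foldr max x := hle b (hsub.subset (by simp))
    rw [S_cons, List.append_assoc] at hsort
    obtain ⟨hsA, hrest, cross1⟩ := List.pairwise_append.mp hsort
    obtain ⟨hsB, -, -⟩ := List.pairwise_append.mp hrest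
    have contra : ∀ aa ∈ (x :: t).takeWhile (· ≠ t.foldr max x),
        ∀ cc ∈ ((x :: t).dropWhile (· ≠ t.foldr max x)).tail, cc < aa → False := by
      intro aa haa cc hcc hlt
      have := cross1 aa ((S_perm _).mem_iff.mpr haa) cc
        (List.mem_append_left _ ((S_perm _).mem_iff.mpr hcc))
      omega
    rw [hd] at hsub
    obtain ⟨u, v, heq, huA, hvB⟩ := List.sublist_append_iff.mp hsub
    rcases u with _ | ⟨u1, _ | ⟨u2, _ | ⟨u3, _ | ⟨u4, u'⟩⟩⟩⟩
    · -- u = [], v = [a,b,c] ≤ m :: B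
      rw [List.nil_append] at heq
      subst heq
      rcases List.sublist_cons_iff.mp hvB with h | ⟨r, hr, -⟩
      · exact not_pat_of_sorted_S _ hndB ⟨a, b, c, h, hca, hab⟩ hsB
      · have : a = t.foldr max x := by injection hr
        omega
    · -- u = [a], v = [b, c]
      simp only [List.cons_append, List.nil_append] at heq
      injection heq with h1 h2
      subst u1
      subst h2
      have hcB : c ∈ ((x :: t).dropWhile (· ≠ t.foldr max x)).tail := by
        have hmem : c ∈ t.foldr max x :: ((x :: t).dropWhile (· ≠ t.foldr max x)).tail :=
          hvB.subset (by simp)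
        rcases List.mem_cons.mp hmem with h | h
        · omega
        · exact h
      exact contra a (huA.subset (by simp)) c hcB hca
    · -- u = [a, b], v = [c]
      simp only [List.cons_append, List.nil_append] at heq
      injection heq with h1 h2
      injection h2 with h2 h3
      subst u1
      subst u2
      subst h3
      have hcB : c ∈ ((x :: t).dropWhile (· ≠ t.foldr max x)).tail := by
        have hmem : c ∈ t.foldr max x :: ((x :: t).dropWhile (· ≠ t.foldr max x)).tail :=
          hvB.subset (by simp)
        rcases List.mem_cons.mp hmem with h | h
        · omega
        · exact h
      exact contra a (huA.subset (by simp)) c hcB hca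
    · -- u = [a, b, c]
      simp only [List.cons_append, List.nil_append] at heq
      injection heq with h1 h2
      injection h2 with h2 h3
      injection h3 with h3 h4
      subst u1
      subst u2
      subst u3
      exact not_pat_of_sorted_S _ hndA ⟨a, b, c, huA, hca, hab⟩ hsA
    · simp at heq
  termination_by l => l.length
  decreasing_by
  · exact length_tail_dropWhile_lt (by simp)
  · exact length_takeWhile_lt (foldr_max_mem x t)

theorem idPerm_nodup (k : ℕ) : (idPerm k).Nodup := List.nodup_range' (s := 1) (n := k)

theorem idPerm_sorted (k : ℕ) : List.Pairwise (· < ·) (idPerm k) := List.pairwise_lt_range' (s := 1) (n := k)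

theorem idPerm_length (k : ℕ) : (idPerm k).length = k := by simp [idPerm]

theorem idPerm_toFinset (k : ℕ) : (idPerm k).toFinset = Finset.Icc 1 k := by
  ext v
  simp only [idPerm, List.mem_toFinset, List.mem_range'_1, Finset.mem_Icc]
  omega

theorem mem_isPermOf {l : List ℕ} {k : ℕ} (h : l.Perm (idPerm k)) (x : ℕ) :
    x ∈ l ↔ 1 ≤ x ∧ x ≤ k := by
  rw [h.mem_iff]
  simp only [idPerm, List.mem_range'_1]
  omega

theorem eq_idPerm_of_sorted_perm {l : List ℕ} {k : ℕ} (hp : l.Perm (idPerm k))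
    (hs : List.Pairwise (· < ·) l) : l = idPerm k :=
  List.Perm.eq_of_pairwise (fun _ _ _ _ h1 h2 => absurd (h1.trans h2) (lt_irrefl _)) hs (idPerm_sorted k) hp

theorem lrMaxima_pairwise (l : List ℕ) : List.Pairwise (· < ·) (lrMaxima l) := by
  unfold lrMaxima
  rw [List.pairwise_map]
  refine List.Pairwise.imp_of_mem ?_
    (((List.pairwise_lt_range (n := l.length)).sublist List.filter_sublist))
  intro i j hi hj hlt
  obtain ⟨hjr, hjp⟩ := List.mem_filter.mp hj
  obtain ⟨hir, -⟩ := List.mem_filter.mp hi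
  have hil : i < l.length := List.mem_range.mp hir
  have hjl : j < l.length := List.mem_range.mp hjr
  have hmem : l.getD i 0 ∈ l.take j := by
    rw [List.getD_eq_getElem _ _ hil]
    have hlen : i < (l.take j).length := by
      rw [List.length_take]
      omega
    have e : (l.take j)[i]'(hlen) = l[i]'hil := List.getElem_take
    rw [← e]
    exact List.getElem_mem _
  have := (List.all_eq_true.mp hjp) _ hmem
  simpa using this

theorem lrMaxima_length (l : List ℕ) : (lrMaxima l).length = lmax l := by
  simp [lrMaxima, lmax, List.countP_eq_length_filter]

theorem mem_lrMaxima_of {u v : List ℕ} {a : ℕ} (h : ∀ b ∈ u, b < a) :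
    a ∈ lrMaxima (u ++ a :: v) := by
  have hlen : u.length < (u ++ a :: v).length := by simp
  have hget : (u ++ a :: v).getD u.length 0 = a := by
    rw [List.getD_eq_getElem _ _ hlen, List.getElem_append_right (le_refl _)]
    simp
  have htake : (u ++ a :: v).take u.length = u := List.take_left
  unfold lrMaxima
  refine List.mem_map.mpr ⟨u.length, List.mem_filter.mpr ⟨List.mem_range.mpr hlen, ?_⟩, hget⟩
  rw [htake, hget]
  exact List.all_eq_true.mpr (fun b hb => by simpa using h b hb)

theorem pairwise_getD_inj {L : List ℕ} (hp : List.Pairwise (· < ·) L) {i j : ℕ}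
    (hi : i < L.length) (hj : j < L.length) (he : L.getD i 0 = L.getD j 0) : i = j := by
  rw [List.getD_eq_getElem _ _ hi, List.getD_eq_getElem _ _ hj] at he
  rcases lt_trichotomy i j with h | h | h
  · have := List.pairwise_iff_getElem.mp hp i j hi hj h
    omega
  · exact h
  · have := List.pairwise_iff_getElem.mp hp j i hj hi h
    omega

theorem mem_lrMaxima_mem {l : List ℕ} {a : ℕ} (h : a ∈ lrMaxima l) : a ∈ l := by
  unfold lrMaxima at h
  obtain ⟨i, hi, rfl⟩ := List.mem_map.mp h
  obtain ⟨hir, -⟩ := List.mem_filter.mp hi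
  have hil : i < l.length := List.mem_range.mp hir
  rw [List.getD_eq_getElem _ _ hil]
  exact List.getElem_mem _

theorem Pat231.map {f : ℕ → ℕ} (hf : StrictMono f) {l : List ℕ} :
    Pat231 l → Pat231 (l.map f) := by
  rintro ⟨a, b, c, hs, h1, h2⟩
  exact ⟨f a, f b, f c, by simpa using hs.map f, hf h1, hf h2⟩

theorem S_max_decomp {A : List ℕ} (hA : A ≠ []) :
    ∃ w M, S A = w ++ [M] ∧ M ∈ A ∧ ∀ z ∈ A, z ≤ M := by
  cases A with
  | nil => exact absurd rfl hA
  | cons x t =>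
    exact ⟨_, _, S_cons x t, foldr_max_mem x t, le_foldr_max x t⟩

theorem list_toFinset_map (f : ℕ → ℕ) (l : List ℕ) :
    (l.map f).toFinset = l.toFinset.image f := by
  ext x
  simp [List.mem_map, Finset.mem_image]

/-- Decomposition of a two-stack sortable permutation. -/
theorem main_decomp {n : ℕ} (hn : 1 ≤ n) {π : List ℕ} (hperm : π.Perm (idPerm n))
    (h2 : S (S π) = idPerm n) :
    ∃ A B, π = A ++ n :: B ∧ (∀ z ∈ A, z ≠ n) ∧ (A ++ B).Perm (idPerm (n - 1)) ∧
      S (S A ++ S B) = idPerm (n - 1) ∧ π.Nodup := by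
  have hnd : π.Nodup := hperm.nodup_iff.mpr (idPerm_nodup n)
  have hid : idPerm n = idPerm (n - 1) ++ [n] := by
    have h3 : n = (n - 1) + 1 := by omega
    have h4 : 1 + 1 * (n - 1) = n := by omega
    conv_lhs => rw [idPerm, h3, List.range'_concat, h4]
    rfl
  cases π with
  | nil =>
    have := hperm.length_eq
    rw [idPerm_length] at this
    simp at this
    omega
  | cons x t =>
    have hm_mem : t.foldr max x ∈ x :: t := foldr_max_mem x t
    have hmn : t.foldr max x = n := by
      have h1 : n ∈ x :: t := (mem_isPermOf hperm n).mpr ⟨hn, le_refl n⟩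
      have h2' : n ≤ t.foldr max x := le_foldr_max x t n h1
      have h3 : t.foldr max x ≤ n := ((mem_isPermOf hperm _).mp hm_mem).2
      omega
    have hd : x :: t = (x :: t).takeWhile (· ≠ n) ++
        n :: ((x :: t).dropWhile (· ≠ n)).tail := by
      have := decomp hm_mem
      rw [hmn] at this
      exact this
    have hS : S (x :: t) = S ((x :: t).takeWhile (· ≠ n)) ++
        S (((x :: t).dropWhile (· ≠ n)).tail) ++ [n] := by
      have := S_cons x t
      rw [hmn] at this
      exact this
    have hndAB : ((x :: t).takeWhile (· ≠ n) ++
        n :: ((x :: t).dropWhile (· ≠ n)).tail).Nodup := hd ▸ hnd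
    have hAne : ∀ z ∈ (x :: t).takeWhile (· ≠ n), z ≠ n := by
      intro z hz
      simpa using List.mem_takeWhile_imp hz
    have hBn : n ∉ ((x :: t).dropWhile (· ≠ n)).tail :=
      (List.nodup_cons.mp hndAB.of_append_right).1
    refine ⟨(x :: t).takeWhile (· ≠ n), ((x :: t).dropWhile (· ≠ n)).tail, hd, hAne, ?_, ?_, hnd⟩
    · have hpermAB : ((x :: t).takeWhile (· ≠ n) ++
          n :: ((x :: t).dropWhile (· ≠ n)).tail).Perm (idPerm n) := hd ▸ hperm
      have h1 : (n :: ((x :: t).takeWhile (· ≠ n) ++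
          ((x :: t).dropWhile (· ≠ n)).tail)).Perm (idPerm (n - 1) ++ [n]) := by
        rw [← hid]
        exact List.perm_middle.symm.trans hpermAB
      exact (h1.trans (List.perm_append_singleton n (idPerm (n - 1)))).cons_inv
    · have hlt : ∀ z ∈ S ((x :: t).takeWhile (· ≠ n)) ++
          S (((x :: t).dropWhile (· ≠ n)).tail), z < n := by
        intro z hz
        rcases List.mem_append.mp hz with hz | hz
        · have hzA := (S_perm _).mem_iff.mp hz
          have h1 : z ≤ n := ((mem_isPermOf hperm z).mp ((List.takeWhile_sublist _).subset hzA)).2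
          have h2' : z ≠ n := hAne z hzA
          omega
        · have hzB := (S_perm _).mem_iff.mp hz
          have hzπ : z ∈ x :: t :=
            ((List.tail_sublist _).trans (List.dropWhile_sublist _)).subset hzB
          have h1 : z ≤ n := ((mem_isPermOf hperm z).mp hzπ).2
          have h2' : z ≠ n := fun he => hBn (he ▸ hzB)
          omega
      have hS2 : S (S (x :: t)) = S (S ((x :: t).takeWhile (· ≠ n)) ++
          S (((x :: t).dropWhile (· ≠ n)).tail)) ++ [n] := by
        rw [hS, S_append_max hlt]
      rw [hS2, hid] at h2
      exact List.append_cancel_right h2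

/-- Structure of the left part. -/
theorem content_lemma {N : ℕ} {A B : List ℕ} (hnd : (A ++ B).Nodup)
    (hperm : (A ++ B).Perm (idPerm N)) (hA : A ≠ [])
    {M : ℕ} (hM_mem : M ∈ A) (hM_max : ∀ z ∈ A, z ≤ M)
    (hcross : ∀ a ∈ A, a ≠ M → ∀ b ∈ B, a < b) :
    A.length ≤ M ∧ A.toFinset = insert M (Finset.Ico 1 A.length) ∧
      (∀ b ∈ B, A.length ≤ b ∧ b ≠ M) := by
  have hndA := hnd.of_append_left
  have hdisj := List.disjoint_of_nodup_append hnd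
  have hbound : ∀ v, v ∈ A ∨ v ∈ B ↔ (1 ≤ v ∧ v ≤ N) := by
    intro v
    rw [← List.mem_append]
    exact mem_isPermOf hperm v
  have hk1 : 1 ≤ A.length := List.length_pos_iff.mpr hA
  have hcardA : A.toFinset.card = A.length := List.toFinset_card_of_nodup hndA
  have hlen_sum : A.length + B.length = N := by
    have := hperm.length_eq
    rw [idPerm_length, List.length_append] at this
    exact this
  -- every non-maximal element of A is < A.length
  have claim1 : ∀ a ∈ A, a ≠ M → a < A.length := by
    intro a ha hne
    have haM : a < M := lt_of_le_of_ne (hM_max a ha) hne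
    have haN : a ≤ N := ((hbound a).mp (Or.inl ha)).2
    have hsub : insert M (Finset.Icc 1 a) ⊆ A.toFinset := by
      intro v hv
      rcases Finset.mem_insert.mp hv with rfl | hv
      · exact List.mem_toFinset.mpr hM_mem
      · rw [Finset.mem_Icc] at hv
        refine List.mem_toFinset.mpr ?_
        rcases (hbound v).mpr ⟨hv.1, le_trans hv.2 haN⟩ with h | h
        · exact h
        · exact absurd (hcross a ha hne v h) (by omega)
    have hMni : M ∉ Finset.Icc 1 a := by
      rw [Finset.mem_Icc]
      omega
    have := Finset.card_le_card hsub
    rw [Finset.card_insert_of_notMem hMni, Nat.card_Icc, hcardA] at this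
    omega
  have claim2 : A.length ≤ M := by
    have hsub : A.toFinset ⊆ Finset.Icc 1 M := by
      intro v hv
      rw [List.mem_toFinset] at hv
      rw [Finset.mem_Icc]
      exact ⟨((hbound v).mp (Or.inl hv)).1, hM_max v hv⟩
    have := Finset.card_le_card hsub
    rw [hcardA, Nat.card_Icc] at this
    omega
  have claim3 : A.toFinset = insert M (Finset.Ico 1 A.length) := by
    have hMni : M ∉ Finset.Ico 1 A.length := by
      rw [Finset.mem_Ico]
      omega
    refine (Finset.eq_of_subset_of_card_le ?_ ?_).symm
    · intro v hv
      rcases Finset.mem_insert.mp hv with rfl | hv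
      · exact List.mem_toFinset.mpr hM_mem
      · rw [Finset.mem_Ico] at hv
        -- v < A.length, need v ∈ A
        by_contra hvA
        rw [List.mem_toFinset] at hvA
        have hvB : v ∈ B := by
          rcases (hbound v).mpr ⟨hv.1, by omega⟩ with h | h
          · exact absurd h hvA
          · exact h
        have : ∀ a ∈ A, a ≠ M → a < v := fun a ha hne => hcross a ha hne v hvB
        -- count: A.toFinset ⊆ insert M (Icc 1 (v-1))... card ≤ v - 1 + 1 < A.length
        have hsub : A.toFinset ⊆ insert M (Finset.Icc 1 (v - 1)) := by
          intro z hz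
          rw [List.mem_toFinset] at hz
          by_cases hzM : z = M
          · subst hzM; exact Finset.mem_insert_self _ _
          · refine Finset.mem_insert.mpr (Or.inr ?_)
            rw [Finset.mem_Icc]
            have := this z hz hzM
            have := ((hbound z).mp (Or.inl hz)).1
            omega
        have hMv : M ∉ Finset.Icc 1 (v - 1) := by
          rw [Finset.mem_Icc]
          have hvN : 1 ≤ v := ((hbound v).mp (Or.inr hvB)).1
          omega
        have := Finset.card_le_card hsub
        rw [Finset.card_insert_of_notMem hMv, Nat.card_Icc, hcardA] at this
        have hvb : v ≥ 1 := ((hbound v).mp (Or.inr hvB)).1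
        omega
    · rw [hcardA, Finset.card_insert_of_notMem hMni, Nat.card_Ico]
      omega
  refine ⟨claim2, claim3, ?_⟩
  intro b hb
  have hbM : b ≠ M := fun he => hdisj hM_mem (he ▸ hb)
  constructor
  · by_contra hbk
    push_neg at hbk
    have hb1 : 1 ≤ b := ((hbound b).mp (Or.inr hb)).1
    have : b ∈ A.toFinset := by
      rw [claim3]
      refine Finset.mem_insert.mpr (Or.inr ?_)
      rw [Finset.mem_Ico]
      omega
    rw [List.mem_toFinset] at this
    exact hdisj this hb
  · exact hbM

def fA (k a z : ℕ) : ℕ := if z < k then z else z + a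
def gA (M k z : ℕ) : ℕ := if z = M then k else z
def fB (k a z : ℕ) : ℕ := if z < a + 1 then z + (k - 1) else z + k
def gB (M k z : ℕ) : ℕ := if z < M then z - (k - 1) else z - k

theorem fA_mono (k a : ℕ) : StrictMono (fA k a) := by
  intro u v huv
  unfold fA
  split_ifs <;> omega

theorem fB_mono (k a : ℕ) : StrictMono (fB k a) := by
  intro u v huv
  unfold fB
  split_ifs <;> omega

theorem addk_mono (k : ℕ) : StrictMono (fun z : ℕ => z + k) := by
  intro u v huv
  show u + k < v + k
  omega

theorem list_map_eq_self {l : List ℕ} {f : ℕ → ℕ} (h : ∀ z ∈ l, f z = z) : l.map f = l := by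
  induction l with
  | nil => rfl
  | cons x t ih =>
    rw [List.map_cons, h x (by simp), ih (fun z hz => h z (by simp [hz]))]

theorem shift3_eq_fA (k a : ℕ) (l : List ℕ) : shift3 0 k a l = l.map (fA k a) := by
  unfold shift3 fA
  apply List.map_congr_left
  intro z _
  split_ifs <;> omega

theorem shift3_eq_fB (k a : ℕ) (l : List ℕ) :
    shift3 (k - 1) (a + 1) k l = l.map (fB k a) := rfl

theorem is2ss_of {p : List ℕ} {k : ℕ} (hperm : p.Perm (idPerm k))
    (hnp : ¬ Pat231 (S p)) : Is2SS p := by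
  have hlen : p.length = k := by
    have := hperm.length_eq
    rwa [idPerm_length] at this
  have hpnd : p.Nodup := hperm.nodup_iff.mpr (idPerm_nodup k)
  have hndSp : (S p).Nodup := ((S_perm p).nodup_iff).mpr hpnd
  have hs := sorted_S_of_not_pat (S p) hndSp hnp
  constructor
  · rw [hlen]; exact hperm
  · rw [hlen]
    exact eq_idPerm_of_sorted_perm (((S_perm (S p)).trans (S_perm p)).trans hperm) hs

theorem existence {n : ℕ} (hn : 1 ≤ n) {π : List ℕ} (hlen : π.length = n) (h : Is2SS π) :
    (∃ p : List ℕ × List ℕ,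
        (p.1 = [] ∨ Is2SS p.1) ∧ (p.2 = [] ∨ Is2SS p.2) ∧ π = C1 p.1 p.2) ∨
      (∃ q : List ℕ × List ℕ × ℕ,
        (q.1 ≠ [] ∧ Is2SS q.1) ∧ (q.2.1 ≠ [] ∧ Is2SS q.2.1) ∧
        1 ≤ q.2.2 ∧ q.2.2 ≤ slmax q.2.1 ∧ π = C2 q.1 q.2.1 q.2.2) := by
  obtain ⟨hperm, h2⟩ := h
  rw [hlen] at hperm h2
  obtain ⟨A, B, hd, hAne, hpermAB, hSS, hnd⟩ := main_decomp hn hperm h2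
  have hlen_sum : A.length + B.length = n - 1 := by
    have := hpermAB.length_eq
    rw [idPerm_length, List.length_append] at this
    exact this
  have hndAB : (A ++ B).Nodup := hpermAB.nodup_iff.mpr (idPerm_nodup _)
  have hτnd : (S A ++ S B).Nodup := (((S_perm A).append (S_perm B)).nodup_iff).mpr hndAB
  have hτsorted : List.Pairwise (· < ·) (S (S A ++ S B)) := by
    rw [hSS]; exact idPerm_sorted _
  have hnp : ¬ Pat231 (S A ++ S B) := fun hp => not_pat_of_sorted_S _ hτnd hp hτsorted
  have hnpA : ¬ Pat231 (S A) := fun hp => hnp (hp.mono (List.sublist_append_left _ _))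
  have hnpB : ¬ Pat231 (S B) := fun hp => hnp (hp.mono (List.sublist_append_right _ _))
  have hdisj := List.disjoint_of_nodup_append hndAB
  have hbound : ∀ v ∈ A ++ B, 1 ≤ v ∧ v ≤ n - 1 := fun v hv => (mem_isPermOf hpermAB v).mp hv
  by_cases hAnil : A = []
  · -- C1 with empty left part
    subst hAnil
    have hBlen : B.length = n - 1 := by simpa using hlen_sum
    refine Or.inl ⟨([], B), Or.inl rfl, Or.inr ?_, ?_⟩
    · refine is2ss_of (k := n - 1) ?_ ?_
      · simpa using hpermAB
      · simpa using hnpB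
    · show π = C1 [] B
      rw [C1, hd]
      simp only [List.length_nil, List.nil_append, shift, zero_add]
      rw [list_map_eq_self (fun z _ => by omega)]
      congr 1
      omega
  · obtain ⟨w, M, hw, hM_mem, hM_max⟩ := S_max_decomp hAnil
    have hcross : ∀ a ∈ A, a ≠ M → ∀ b ∈ B, a < b := by
      intro a ha hneM b hb
      have hab : a ≠ b := fun he => hdisj ha (he ▸ hb)
      by_contra hlt
      push_neg at hlt
      have hba : b < a := lt_of_le_of_ne hlt (fun he => hab he.symm)
      apply hnp
      refine ⟨a, M, b, ?_, hba, lt_of_le_of_ne (hM_max a ha) hneM⟩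
      have haw : a ∈ w := by
        have hmem : a ∈ S A := (S_perm A).mem_iff.mpr ha
        rw [hw] at hmem
        rcases List.mem_append.mp hmem with hh | hh
        · exact hh
        · simp at hh; exact absurd hh hneM
      have h1 : List.Sublist [a, M] (S A) := by
        rw [hw]
        exact List.Sublist.append (List.singleton_sublist.mpr haw) (List.Sublist.refl [M])
      have h2' : List.Sublist [b] (S B) :=
        List.singleton_sublist.mpr ((S_perm B).mem_iff.mpr hb)
      exact List.Sublist.append h1 h2'
    obtain ⟨hkM, hAfin, hBfacts⟩ :=
      content_lemma hndAB hpermAB hAnil hM_mem hM_max hcross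
    have hk1 : 1 ≤ A.length := List.length_pos_iff.mpr hAnil
    have hMN : M ≤ n - 1 := (hbound M (List.mem_append_left _ hM_mem)).2
    have hAmem : ∀ z ∈ A, z = M ∨ (1 ≤ z ∧ z < A.length) := by
      intro z hz
      have hz' : z ∈ A.toFinset := List.mem_toFinset.mpr hz
      rw [hAfin] at hz'
      rcases Finset.mem_insert.mp hz' with hh | hh
      · exact Or.inl hh
      · rw [Finset.mem_Ico] at hh; exact Or.inr hh
    by_cases hMk : M = A.length
    · -- C1 case
      have hApermk : A.Perm (idPerm A.length) := by
        refine List.perm_of_nodup_nodup_toFinset_eq hndAB.of_append_left (idPerm_nodup _) ?_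
        rw [hAfin, idPerm_toFinset]
        ext v
        simp only [Finset.mem_insert, Finset.mem_Ico, Finset.mem_Icc]
        omega
      have hA2 : Is2SS A := is2ss_of hApermk hnpA
      have hBge : ∀ b ∈ B, A.length + 1 ≤ b := by
        intro b hb
        have := hBfacts b hb
        omega
      have hBeq : (B.map (fun z => z - A.length)).map (fun z => z + A.length) = B := by
        rw [List.map_map]
        exact list_map_eq_self (fun z hz => by have := hBge z hz; simp; omega)
      have hBfin : B.toFinset = Finset.Icc (A.length + 1) (n - 1) := by
        ext v
        simp only [List.mem_toFinset, Finset.mem_Icc]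
        constructor
        · intro hv
          exact ⟨hBge v hv, (hbound v (List.mem_append_right _ hv)).2⟩
        · intro hv
          rcases List.mem_append.mp ((mem_isPermOf hpermAB v).mpr ⟨by omega, hv.2⟩) with hh | hh
          · exfalso
            rcases hAmem v hh with rfl | hvv <;> omega
          · exact hh
      have hp2nd : (B.map (fun z => z - A.length)).Nodup := by
        refine List.Nodup.map_on ?_ hndAB.of_append_right
        intro z hz y hy he
        have h1 := hBge z hz
        have h2' := hBge y hy
        omega
      have hp2perm : (B.map (fun z => z - A.length)).Perm (idPerm B.length) := by
        refine List.perm_of_nodup_nodup_toFinset_eq hp2nd (idPerm_nodup _) ?_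
        rw [list_toFinset_map, hBfin, idPerm_toFinset]
        ext x
        simp only [Finset.mem_image, Finset.mem_Icc]
        constructor
        · rintro ⟨b, hb, rfl⟩
          omega
        · intro hx
          exact ⟨x + A.length, by omega, by omega⟩
      have hSB : S B = (S (B.map (fun z => z - A.length))).map (fun z => z + A.length) := by
        conv_lhs => rw [← hBeq]
        exact S_map (addk_mono _) _
      have hnp2 : ¬ Pat231 (S (B.map (fun z => z - A.length))) := by
        intro hp
        exact hnpB (by rw [hSB]; exact hp.map (addk_mono _))
      have hB2 : Is2SS (B.map (fun z => z - A.length)) := is2ss_of hp2perm hnp2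
      refine Or.inl ⟨(A, B.map (fun z => z - A.length)), Or.inr hA2, Or.inr hB2, ?_⟩
      show π = A ++ (A.length + (B.map (fun z => z - A.length)).length + 1) ::
        shift A.length (B.map (fun z => z - A.length))
      rw [hd]
      have hv : A.length + (B.map (fun z => z - A.length)).length + 1 = n := by
        rw [List.length_map]
        omega
      rw [hv]
      congr 1
      congr 1
      unfold shift
      exact hBeq.symm
    · -- C2 case
      have hkM' : A.length < M := lt_of_le_of_ne hkM (fun he => hMk he.symm)
      have hBne : B ≠ [] := by
        intro hBnil
        rw [hBnil] at hlen_sum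
        simp at hlen_sum
        omega
      have hBmem : ∀ v, v ∈ B ↔ (A.length ≤ v ∧ v ≤ n - 1 ∧ v ≠ M) := by
        intro v
        constructor
        · intro hv
          obtain ⟨h1, h2'⟩ := hBfacts v hv
          exact ⟨h1, (hbound v (List.mem_append_right _ hv)).2, h2'⟩
        · rintro ⟨h1, h2', h3⟩
          rcases List.mem_append.mp ((mem_isPermOf hpermAB v).mpr ⟨by omega, h2'⟩) with hv | hv
          · exfalso
            rcases hAmem v hv with rfl | hvv
            · exact h3 rfl
            · omega
          · exact hv
      -- p1 = A.map (gA M A.length)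
      have hAback : (A.map (gA M A.length)).map (fA A.length (M - A.length)) = A := by
        rw [List.map_map]
        apply list_map_eq_self
        intro z hz
        rcases hAmem z hz with rfl | hzr
        · simp only [Function.comp_apply, gA, fA]
          split_ifs <;> omega
        · simp only [Function.comp_apply, gA, fA]
          split_ifs <;> omega
      have hp1fin : (A.map (gA M A.length)).toFinset = Finset.Icc 1 A.length := by
        ext v
        simp only [List.mem_toFinset, List.mem_map, Finset.mem_Icc]
        constructor
        · rintro ⟨z, hz, rfl⟩
          rcases hAmem z hz with rfl | hzr
          · unfold gA; rw [if_pos rfl]; omega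
          · unfold gA; rw [if_neg (by omega)]; omega
        · intro hv
          by_cases hvk : v = A.length
          · exact ⟨M, hM_mem, by unfold gA; rw [if_pos rfl, hvk]⟩
          · have hvA : v ∈ A := by
              have hv' : v ∈ A.toFinset := by
                rw [hAfin]
                exact Finset.mem_insert.mpr (Or.inr (by rw [Finset.mem_Ico]; omega))
              exact List.mem_toFinset.mp hv'
            exact ⟨v, hvA, by unfold gA; rw [if_neg (by omega)]⟩
      have hp1nd : (A.map (gA M A.length)).Nodup := by
        refine List.Nodup.map_on ?_ hndAB.of_append_left
        intro z hz y hy he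
        unfold gA at he
        rcases hAmem z hz with rfl | hz2 <;> rcases hAmem y hy with rfl | hy2
        · rfl
        · rw [if_pos rfl, if_neg (by omega)] at he; omega
        · rw [if_neg (by omega), if_pos rfl] at he; omega
        · rw [if_neg (by omega), if_neg (by omega)] at he; exact he
      have hp1perm : (A.map (gA M A.length)).Perm (idPerm A.length) :=
        List.perm_of_nodup_nodup_toFinset_eq hp1nd (idPerm_nodup _)
          (by rw [hp1fin, idPerm_toFinset])
      have hSA : S A = (S (A.map (gA M A.length))).map (fA A.length (M - A.length)) := by
        conv_lhs => rw [← hAback]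
        exact S_map (fA_mono _ _) _
      have hnp1 : ¬ Pat231 (S (A.map (gA M A.length))) := by
        intro hp
        exact hnpA (by rw [hSA]; exact hp.map (fA_mono _ _))
      have hA2 : Is2SS (A.map (gA M A.length)) := is2ss_of hp1perm hnp1
      -- p2 = B.map (gB M A.length)
      have hBback : (B.map (gB M A.length)).map (fB A.length (M - A.length)) = B := by
        rw [List.map_map]
        apply list_map_eq_self
        intro b hb
        obtain ⟨hb1, hb2, hb3⟩ := (hBmem b).mp hb
        simp only [Function.comp_apply, gB, fB]
        split_ifs <;> omega
      have hp2fin : (B.map (gB M A.length)).toFinset = Finset.Icc 1 B.length := by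
        ext v
        simp only [List.mem_toFinset, List.mem_map, Finset.mem_Icc]
        constructor
        · rintro ⟨b, hb, rfl⟩
          obtain ⟨hb1, hb2, hb3⟩ := (hBmem b).mp hb
          unfold gB
          by_cases hbM : b < M
          · rw [if_pos hbM]; omega
          · rw [if_neg hbM]; omega
        · intro hv
          by_cases hva : v ≤ M - A.length
          · refine ⟨v + A.length - 1, (hBmem _).mpr ⟨by omega, by omega, by omega⟩, ?_⟩
            unfold gB
            rw [if_pos (by omega)]
            omega
          · refine ⟨v + A.length, (hBmem _).mpr ⟨by omega, by omega, by omega⟩, ?_⟩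
            unfold gB
            rw [if_neg (by omega)]
            omega
      have hp2nd : (B.map (gB M A.length)).Nodup := by
        refine List.Nodup.map_on ?_ hndAB.of_append_right
        intro z hz y hy he
        obtain ⟨hz1, hz2, hz3⟩ := (hBmem z).mp hz
        obtain ⟨hy1, hy2, hy3⟩ := (hBmem y).mp hy
        unfold gB at he
        by_cases h1 : z < M <;> by_cases h2' : y < M
        · rw [if_pos h1, if_pos h2'] at he; omega
        · rw [if_pos h1, if_neg h2'] at he; omega
        · rw [if_neg h1, if_pos h2'] at he; omega
        · rw [if_neg h1, if_neg h2'] at he; omega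
      have hp2perm : (B.map (gB M A.length)).Perm (idPerm B.length) :=
        List.perm_of_nodup_nodup_toFinset_eq hp2nd (idPerm_nodup _)
          (by rw [hp2fin, idPerm_toFinset])
      have hSB : S B = (S (B.map (gB M A.length))).map (fB A.length (M - A.length)) := by
        conv_lhs => rw [← hBback]
        exact S_map (fB_mono _ _) _
      have hnp2 : ¬ Pat231 (S (B.map (gB M A.length))) := by
        intro hp
        exact hnpB (by rw [hSB]; exact hp.map (fB_mono _ _))
      have hB2 : Is2SS (B.map (gB M A.length)) := is2ss_of hp2perm hnp2
      -- the value a = M - A.length is a left-to-right maximum of S(p2)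
      have hBlen : B.length = n - 1 - A.length := by omega
      have haB : M - A.length ∈ S (B.map (gB M A.length)) := by
        refine (S_perm _).mem_iff.mpr ?_
        refine (mem_isPermOf hp2perm _).mpr ⟨by omega, by omega⟩
      have hpos : List.idxOf (M - A.length) (S (B.map (gB M A.length))) <
          (S (B.map (gB M A.length))).length := List.idxOf_lt_length_iff.mpr haB
      have hsplit : S (B.map (gB M A.length)) =
          (S (B.map (gB M A.length))).take
            (List.idxOf (M - A.length) (S (B.map (gB M A.length)))) ++
          (M - A.length) ::
          (S (B.map (gB M A.length))).drop
            (List.idxOf (M - A.length) (S (B.map (gB M A.length))) + 1) := by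
        conv_lhs => rw [← List.take_append_drop
          (List.idxOf (M - A.length) (S (B.map (gB M A.length))))
          (S (B.map (gB M A.length)))]
        congr 1
        rw [List.drop_eq_getElem_cons hpos, List.getElem_idxOf hpos]
      have hndsp2 : (S (B.map (gB M A.length))).Nodup :=
        (S_perm _).nodup_iff.mpr (hp2perm.nodup_iff.mpr (idPerm_nodup _))
      have hu : ∀ b ∈ (S (B.map (gB M A.length))).take
          (List.idxOf (M - A.length) (S (B.map (gB M A.length)))), b < M - A.length := by
        intro b hb
        by_contra hba
        push_neg at hba
        have hbne : b ≠ M - A.length := by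
          have hnd2 := hndsp2
          rw [hsplit] at hnd2
          have hdisj2 := List.disjoint_of_nodup_append hnd2
          exact fun he => hdisj2 hb (he ▸ List.mem_cons_self)
        have hab : M - A.length < b := by omega
        apply hnp
        refine ⟨M, fB A.length (M - A.length) b, fB A.length (M - A.length) (M - A.length),
          ?_, ?_, ?_⟩
        · have hsubM : List.Sublist [M] (S A) := by
            refine List.singleton_sublist.mpr ?_
            rw [hw]
            exact List.mem_append_right _ (by simp)
          have hsub2 : List.Sublist [fB A.length (M - A.length) b,
              fB A.length (M - A.length) (M - A.length)] (S B) := by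
            rw [hSB, hsplit, List.map_append, List.map_cons]
            have hy1 : List.Sublist [fB A.length (M - A.length) b]
                (List.map (fB A.length (M - A.length))
                  ((S (B.map (gB M A.length))).take
                    (List.idxOf (M - A.length) (S (B.map (gB M A.length)))))) :=
              List.singleton_sublist.mpr (List.mem_map_of_mem hb)
            have hy2 : List.Sublist [fB A.length (M - A.length) (M - A.length)]
                (fB A.length (M - A.length) (M - A.length) ::
                  List.map (fB A.length (M - A.length))
                    ((S (B.map (gB M A.length))).drop
                      (List.idxOf (M - A.length) (S (B.map (gB M A.length))) + 1))) :=
              (List.nil_sublist _).cons₂ _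
            exact List.Sublist.append hy1 hy2
          exact List.Sublist.append hsubM hsub2
        · unfold fB
          rw [if_pos (by omega)]
          omega
        · unfold fB
          rw [if_neg (by omega)]
          omega
      have halr : M - A.length ∈ lrMaxima (S (B.map (gB M A.length))) := by
        rw [hsplit]
        exact mem_lrMaxima_of hu
      have hidx : List.idxOf (M - A.length) (lrMaxima (S (B.map (gB M A.length)))) <
          (lrMaxima (S (B.map (gB M A.length)))).length := List.idxOf_lt_length_iff.mpr halr
      have hlrm : lrm (B.map (gB M A.length))
          (List.idxOf (M - A.length) (lrMaxima (S (B.map (gB M A.length)))) + 1) =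
          M - A.length := by
        unfold lrm
        rw [Nat.add_sub_cancel, List.getD_eq_getElem _ _ hidx, List.getElem_idxOf hidx]
      refine Or.inr ⟨(A.map (gA M A.length), B.map (gB M A.length),
        List.idxOf (M - A.length) (lrMaxima (S (B.map (gB M A.length)))) + 1),
        ⟨?_, hA2⟩, ⟨?_, hB2⟩, Nat.le_add_left 1 _, ?_, ?_⟩
      · simpa using hAnil
      · simpa using hBne
      · show _ + 1 ≤ slmax (B.map (gB M A.length))
        unfold slmax
        rw [← lrMaxima_length]
        omega
      · show π = C2 _ _ _
        rw [C2, hlrm, shift3_eq_fA, shift3_eq_fB, List.length_map, List.length_map,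
          hAback, hBback, hd]
        rw [show A.length + B.length + 1 = n from by omega]

theorem split_unique {u v u' v' : List ℕ} {m : ℕ} (hu : ∀ z ∈ u, z ≠ m)
    (hu' : ∀ z ∈ u', z ≠ m) (he : u ++ m :: v = u' ++ m :: v') : u = u' ∧ v = v' := by
  have h1 := takeWhile_append_eq (v := v) hu
  have h1' := takeWhile_append_eq (v := v') hu'
  have h2 := dropWhile_append_eq (v := v) hu
  have h2' := dropWhile_append_eq (v := v') hu'
  constructor
  · rw [← h1, ← h1', he]
  · have h3 : m :: v = m :: v' := by rw [← h2, ← h2', he]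
    injection h3

theorem mem_le_of_opt {p : List ℕ} (h : p = [] ∨ Is2SS p) :
    ∀ z ∈ p, 1 ≤ z ∧ z ≤ p.length := by
  rcases h with rfl | h
  · simp
  · exact fun z hz => (mem_isPermOf h.1 z).mp hz

theorem lrm_bounds {p2 : List ℕ} {i : ℕ} (h2 : Is2SS p2)
    (hi1 : 1 ≤ i) (hi2 : i ≤ slmax p2) : 1 ≤ lrm p2 i ∧ lrm p2 i ≤ p2.length := by
  have hlen : (lrMaxima (S p2)).length = slmax p2 := lrMaxima_length (S p2)
  have hidx : i - 1 < (lrMaxima (S p2)).length := by omega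
  have hmem : lrm p2 i ∈ lrMaxima (S p2) := by
    unfold lrm
    rw [List.getD_eq_getElem _ _ hidx]
    exact List.getElem_mem _
  have h3 : lrm p2 i ∈ p2 := (S_perm p2).mem_iff.mp (mem_lrMaxima_mem hmem)
  exact (mem_isPermOf h2.1 _).mp h3

theorem lrm_inj {p2 : List ℕ} {i j : ℕ} (hi1 : 1 ≤ i) (hi2 : i ≤ slmax p2)
    (hj1 : 1 ≤ j) (hj2 : j ≤ slmax p2) (he : lrm p2 i = lrm p2 j) : i = j := by
  have hlen : (lrMaxima (S p2)).length = slmax p2 := lrMaxima_length (S p2)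
  have hidx : i - 1 < (lrMaxima (S p2)).length := by omega
  have hjdx : j - 1 < (lrMaxima (S p2)).length := by omega
  have := pairwise_getD_inj (lrMaxima_pairwise (S p2)) hidx hjdx he
  omega

/-- The canonical form of `C2`. -/
theorem C2_eq (p1 p2 : List ℕ) (i : ℕ) :
    C2 p1 p2 i = (p1.map (fA p1.length (lrm p2 i))) ++
      (p1.length + p2.length + 1) :: (p2.map (fB p1.length (lrm p2 i))) := by
  rw [C2, shift3_eq_fA, shift3_eq_fB]

theorem c2_left_facts {p1 p2 : List ℕ} {i : ℕ} (h1 : p1 ≠ [] ∧ Is2SS p1)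
    (h2 : p2 ≠ [] ∧ Is2SS p2) (hi1 : 1 ≤ i) (hi2 : i ≤ slmax p2) :
    1 ≤ p1.length ∧ 1 ≤ lrm p2 i ∧ lrm p2 i ≤ p2.length ∧
      (∀ z ∈ p1.map (fA p1.length (lrm p2 i)), z ≤ p1.length + lrm p2 i) ∧
      p1.length + lrm p2 i ∈ p1.map (fA p1.length (lrm p2 i)) ∧
      (∀ z ∈ p2.map (fB p1.length (lrm p2 i)), z ≤ p1.length + p2.length) := by
  obtain ⟨ha1, ha2⟩ := lrm_bounds h2.2 hi1 hi2
  have hk1 : 1 ≤ p1.length := List.length_pos_iff.mpr h1.1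
  refine ⟨hk1, ha1, ha2, ?_, ?_, ?_⟩
  · intro z hz
    obtain ⟨y, hy, rfl⟩ := List.mem_map.mp hz
    have hb := (mem_isPermOf h1.2.1 y).mp hy
    unfold fA
    split_ifs <;> omega
  · refine List.mem_map.mpr ⟨p1.length, ?_, ?_⟩
    · exact (mem_isPermOf h1.2.1 _).mpr ⟨hk1, le_refl _⟩
    · unfold fA
      rw [if_neg (lt_irrefl _)]
  · intro z hz
    obtain ⟨y, hy, rfl⟩ := List.mem_map.mp hz
    have hb := (mem_isPermOf h2.2.1 y).mp hy
    unfold fB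
    split_ifs <;> omega

theorem unique_c1 {π : List ℕ} {p q : List ℕ × List ℕ}
    (hp : (p.1 = [] ∨ Is2SS p.1) ∧ (p.2 = [] ∨ Is2SS p.2) ∧ π = C1 p.1 p.2)
    (hq : (q.1 = [] ∨ Is2SS q.1) ∧ (q.2 = [] ∨ Is2SS q.2) ∧ π = C1 q.1 q.2) : p = q := by
  obtain ⟨hp1, hp2, hpe⟩ := hp
  obtain ⟨hq1, hq2, hqe⟩ := hq
  rw [hpe] at hqe
  have hlen : p.1.length + p.2.length = q.1.length + q.2.length := by
    have := congrArg List.length hqe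
    simp only [C1, List.length_append, List.length_cons, shift, List.length_map] at this
    omega
  rw [C1, C1, ← hlen] at hqe
  have hu : ∀ z ∈ p.1, z ≠ p.1.length + p.2.length + 1 := by
    intro z hz
    have := mem_le_of_opt hp1 z hz
    omega
  have hu' : ∀ z ∈ q.1, z ≠ p.1.length + p.2.length + 1 := by
    intro z hz
    have := mem_le_of_opt hq1 z hz
    omega
  obtain ⟨he1, he2⟩ := split_unique hu hu' hqe
  have hkk : p.1.length = q.1.length := by rw [he1]
  rw [shift, shift, ← hkk] at he2
  have he2' : p.2 = q.2 :=
    (List.map_injective_iff.mpr (addk_mono p.1.length).injective) he2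
  exact Prod.ext he1 he2'

theorem unique_c2 {π : List ℕ} {p q : List ℕ × List ℕ × ℕ}
    (hp : (p.1 ≠ [] ∧ Is2SS p.1) ∧ (p.2.1 ≠ [] ∧ Is2SS p.2.1) ∧
      1 ≤ p.2.2 ∧ p.2.2 ≤ slmax p.2.1 ∧ π = C2 p.1 p.2.1 p.2.2)
    (hq : (q.1 ≠ [] ∧ Is2SS q.1) ∧ (q.2.1 ≠ [] ∧ Is2SS q.2.1) ∧
      1 ≤ q.2.2 ∧ q.2.2 ≤ slmax q.2.1 ∧ π = C2 q.1 q.2.1 q.2.2) : p = q := by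
  obtain ⟨hp1, hp2, hpi1, hpi2, hpe⟩ := hp
  obtain ⟨hq1, hq2, hqi1, hqi2, hqe⟩ := hq
  obtain ⟨hpk, hpa1, hpa2, hpAle, hpAmem, hpBle⟩ := c2_left_facts hp1 hp2 hpi1 hpi2
  obtain ⟨hqk, hqa1, hqa2, hqAle, hqAmem, hqBle⟩ := c2_left_facts hq1 hq2 hqi1 hqi2
  rw [hpe] at hqe
  rw [C2_eq, C2_eq] at hqe
  have hlen : p.1.length + p.2.1.length = q.1.length + q.2.1.length := by
    have := congrArg List.length hqe
    simp only [List.length_append, List.length_cons, List.length_map] at this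
    omega
  rw [← hlen] at hqe
  have hu : ∀ z ∈ p.1.map (fA p.1.length (lrm p.2.1 p.2.2)),
      z ≠ p.1.length + p.2.1.length + 1 := by
    intro z hz
    have := hpAle z hz
    omega
  have hu' : ∀ z ∈ q.1.map (fA q.1.length (lrm q.2.1 q.2.2)),
      z ≠ p.1.length + p.2.1.length + 1 := by
    intro z hz
    have := hqAle z hz
    have h3 : q.1.length + lrm q.2.1 q.2.2 ≤ q.1.length + q.2.1.length := by omega
    omega
  obtain ⟨he1, he2⟩ := split_unique hu hu' hqe
  have hkk : p.1.length = q.1.length := by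
    have := congrArg List.length he1
    simpa using this
  -- the shifted maxima agree
  have haa : lrm p.2.1 p.2.2 = lrm q.2.1 q.2.2 := by
    have h1 : p.1.length + lrm p.2.1 p.2.2 ≤ q.1.length + lrm q.2.1 q.2.2 :=
      hqAle _ (he1 ▸ hpAmem)
    have h2 : q.1.length + lrm q.2.1 q.2.2 ≤ p.1.length + lrm p.2.1 p.2.2 :=
      hpAle _ (he1.symm ▸ hqAmem)
    omega
  rw [← hkk, ← haa] at he1 he2
  have hep1 : p.1 = q.1 :=
    (List.map_injective_iff.mpr (fA_mono p.1.length (lrm p.2.1 p.2.2)).injective) he1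
  have hep2 : p.2.1 = q.2.1 :=
    (List.map_injective_iff.mpr (fB_mono p.1.length (lrm p.2.1 p.2.2)).injective) he2
  have hei : p.2.2 = q.2.2 := by
    refine lrm_inj hpi1 hpi2 hqi1 ?_ ?_
    · rw [hep2]; exact hqi2
    · rw [haa, hep2]
  exact Prod.ext hep1 (Prod.ext hep2 hei)

theorem excl {π : List ℕ} {p : List ℕ × List ℕ} {q : List ℕ × List ℕ × ℕ}
    (hp : (p.1 = [] ∨ Is2SS p.1) ∧ (p.2 = [] ∨ Is2SS p.2) ∧ π = C1 p.1 p.2)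
    (hq : (q.1 ≠ [] ∧ Is2SS q.1) ∧ (q.2.1 ≠ [] ∧ Is2SS q.2.1) ∧
      1 ≤ q.2.2 ∧ q.2.2 ≤ slmax q.2.1 ∧ π = C2 q.1 q.2.1 q.2.2) : False := by
  obtain ⟨hp1, hp2, hpe⟩ := hp
  obtain ⟨hq1, hq2, hqi1, hqi2, hqe⟩ := hq
  obtain ⟨hqk, hqa1, hqa2, hqAle, hqAmem, hqBle⟩ := c2_left_facts hq1 hq2 hqi1 hqi2
  rw [hpe, C1, C2_eq] at hqe
  have hlen : p.1.length + p.2.length = q.1.length + q.2.1.length := by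
    have := congrArg List.length hqe
    simp only [List.length_append, List.length_cons, List.length_map, shift] at this
    omega
  rw [← hlen] at hqe
  have hu : ∀ z ∈ p.1, z ≠ p.1.length + p.2.length + 1 := by
    intro z hz
    have := mem_le_of_opt hp1 z hz
    omega
  have hu' : ∀ z ∈ q.1.map (fA q.1.length (lrm q.2.1 q.2.2)),
      z ≠ p.1.length + p.2.length + 1 := by
    intro z hz
    have := hqAle z hz
    omega
  obtain ⟨he1, -⟩ := split_unique hu hu' hqe
  have hmem : q.1.length + lrm q.2.1 q.2.2 ∈ p.1 := he1 ▸ hqAmem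
  have hle := mem_le_of_opt hp1 _ hmem
  have hkk : p.1.length = q.1.length := by
    have := congrArg List.length he1
    simpa using this
  omega

/-- every two-stack sortable permutation `π` of length `n ≥ 1` is obtained
in exactly one way by the constructions `C1` and `C2`: either by a unique pair
`(π1, π2)` via `C1`, or by a unique triple `(π1, π2, i)` via `C2`, and the two cases are
mutually exclusive. -/
theorem unique_construction (n : ℕ) (hn : 1 ≤ n) (π : List ℕ) (hlen : π.length = n)
    (h : Is2SS π) :
    ((∃! p : List ℕ × List ℕ,
        (p.1 = [] ∨ Is2SS p.1) ∧ (p.2 = [] ∨ Is2SS p.2) ∧ π = C1 p.1 p.2) ∨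
      (∃! q : List ℕ × List ℕ × ℕ,
        (q.1 ≠ [] ∧ Is2SS q.1) ∧ (q.2.1 ≠ [] ∧ Is2SS q.2.1) ∧
        1 ≤ q.2.2 ∧ q.2.2 ≤ slmax q.2.1 ∧ π = C2 q.1 q.2.1 q.2.2)) ∧
    ¬ ((∃ p : List ℕ × List ℕ,
        (p.1 = [] ∨ Is2SS p.1) ∧ (p.2 = [] ∨ Is2SS p.2) ∧ π = C1 p.1 p.2) ∧
      (∃ q : List ℕ × List ℕ × ℕ,
        (q.1 ≠ [] ∧ Is2SS q.1) ∧ (q.2.1 ≠ [] ∧ Is2SS q.2.1) ∧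
        1 ≤ q.2.2 ∧ q.2.2 ≤ slmax q.2.1 ∧ π = C2 q.1 q.2.1 q.2.2)) := by
  constructor
  · rcases existence hn hlen h with ⟨p, hp⟩ | ⟨q, hq⟩
    · exact Or.inl ⟨p, hp, fun y hy => unique_c1 hy hp⟩
    · exact Or.inr ⟨q, hq, fun y hy => unique_c2 hy hq⟩
  · rintro ⟨⟨p, hp⟩, ⟨q, hq⟩⟩
    exact excl hp hq

end TSP
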